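/- Let J be a topological abelian group containing a finite-index subgroup M isomorphic to Z_p^n, and let d be a positive integer. Then the quotient J/dJ is finite, and #(J/dJ) = #(M/dM) · #J[d] / #M[d], where J[d] denotes the d-torsion subgroup. In particular, if p does not divide d then #(J/dJ) = #J[d], and if d = p then #(J/dJ) = p^n · #J[d]. -/

import Mathlib

/-- Multiplication by `d` as an additive group homomorphism. -/
def mulByHom (A : Type*) [AddCommGroup A] (d : ℕ) : A →+ A where
  toFun x := d • x
  map_zero' := smul_zero d
  map_add' x y := smul_add d x y

/-- The `d`-torsion subgroup `A[d]` of an abelian group `A`. -/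
def dTorsion (A : Type*) [AddCommGroup A] (d : ℕ) : AddSubgroup A := (mulByHom A d).ker

/-- The quotient `A/dA` of an abelian group `A`. -/
abbrev modD (A : Type*) [AddCommGroup A] (d : ℕ) := A ⧸ (mulByHom A d).range

section Aux
variable {p : ℕ} [hp : Fact p.Prime]

lemma isUnit_padic_natCast {m : ℕ} (hm : ¬ p ∣ m) : IsUnit (m : ℤ_[p]) := by
  rw [PadicInt.isUnit_iff]
  have h1 : ‖(m : ℤ_[p])‖ ≤ 1 := PadicInt.norm_le_one _
  have h2 : ¬ ‖(m : ℤ_[p])‖ < 1 := by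
    rw [show ((m : ℤ_[p])) = ((m : ℤ) : ℤ_[p]) by push_cast; ring,
      PadicInt.norm_int_lt_one_iff_dvd]
    exact_mod_cast hm
  exact le_antisymm h1 (not_lt.1 h2)

lemma padic_dvd_iff {d : ℕ} (hd : 1 ≤ d) (z : ℤ_[p]) :
    (d : ℤ_[p]) ∣ z ↔ (p : ℤ_[p]) ^ (d.factorization p) ∣ z := by
  set k := d.factorization p with hk
  have hdd : p ^ k * (d / p ^ k) = d := Nat.ordProj_mul_ordCompl_eq_self d p
  have hu : IsUnit ((d / p ^ k : ℕ) : ℤ_[p]) :=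
    isUnit_padic_natCast (Nat.not_dvd_ordCompl hp.out (by omega))
  have hcast : (d : ℤ_[p]) = (p : ℤ_[p]) ^ k * ((d / p ^ k : ℕ) : ℤ_[p]) := by
    rw [← Nat.cast_pow, ← Nat.cast_mul, hdd]
  rw [hcast, hu.mul_right_dvd]

noncomputable def piToZMod (p : ℕ) [Fact p.Prime] (n k : ℕ) :
    (Fin n → ℤ_[p]) →+ (Fin n → ZMod (p ^ k)) where
  toFun x i := PadicInt.toZModPow k (x i)
  map_zero' := by funext i; simp
  map_add' x y := by funext i; simp

lemma piToZMod_surj (n k : ℕ) : Function.Surjective (piToZMod p n k) := by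
  intro y
  refine ⟨fun i => ((y i).val : ℤ_[p]), funext fun i => ?_⟩
  show PadicInt.toZModPow k (((y i).val : ℕ) : ℤ_[p]) = y i
  rw [map_natCast, ZMod.natCast_val, ZMod.cast_id]

lemma ker_piToZMod (n : ℕ) {d : ℕ} (hd : 1 ≤ d) :
    (piToZMod p n (d.factorization p)).ker = (mulByHom (Fin n → ℤ_[p]) d).range := by
  ext x
  simp only [AddMonoidHom.mem_ker, AddMonoidHom.mem_range]
  constructor
  · intro h
    have h' : ∀ i, (d : ℤ_[p]) ∣ x i := by
      intro i
      rw [padic_dvd_iff hd, ← Ideal.mem_span_singleton, ← PadicInt.ker_toZModPow,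
        RingHom.mem_ker]
      exact congrFun h i
    choose y hy using h'
    refine ⟨y, funext fun i => ?_⟩
    show d • y i = x i
    rw [nsmul_eq_mul, ← hy i]
  · rintro ⟨y, rfl⟩
    funext i
    show PadicInt.toZModPow _ ((d • y) i) = 0
    rw [← RingHom.mem_ker, PadicInt.ker_toZModPow, Ideal.mem_span_singleton]
    refine (padic_dvd_iff hd _).1 ⟨y i, ?_⟩
    show d • y i = d * y i
    rw [nsmul_eq_mul]

set_option maxHeartbeats 1000000 in
noncomputable def modDPadicEquiv (n : ℕ) {d : ℕ} (hd : 1 ≤ d) :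
    modD (Fin n → ℤ_[p]) d ≃+ (Fin n → ZMod (p ^ (d.factorization p))) :=
  AddEquiv.trans
    (QuotientAddGroup.quotientAddEquivOfEq (ker_piToZMod n hd).symm :
      modD (Fin n → ℤ_[p]) d ≃+ ((Fin n → ℤ_[p]) ⧸ (piToZMod p n (d.factorization p)).ker))
    (QuotientAddGroup.quotientKerEquivOfSurjective _ (piToZMod_surj n _))

noncomputable def modDCongr {A B : Type*} [AddCommGroup A] [AddCommGroup B]
    (e : A ≃+ B) (d : ℕ) : modD A d ≃+ modD B d :=
  QuotientAddGroup.congr _ _ e (by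
    ext b
    simp only [AddSubgroup.mem_map, AddMonoidHom.mem_range]
    constructor
    · rintro ⟨a, ⟨x, rfl⟩, rfl⟩
      exact ⟨e x, by show d • e x = e ((mulByHom A d) x); show _ = e (d • x); rw [map_nsmul]⟩
    · rintro ⟨y, rfl⟩
      refine ⟨d • e.symm y, ⟨e.symm y, rfl⟩, ?_⟩
      show e (d • e.symm y) = d • y
      rw [map_nsmul]; simp)
end Aux

/-- Let `J` be an abelian group containing a subgroup `M` of finite index with `M ≅ ℤ_pⁿ`, and
let `d ≥ 1`.  Then `J/dJ` is finite and `#(J/dJ)·#M[d] = #(M/dM)·#J[d]`.  In particular, if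
`p ∤ d` then `#(J/dJ) = #J[d]`, and if `d = p` then `#(J/dJ) = pⁿ·#J[d]`. -/
theorem card_quotient_dJ (p n d : ℕ) [Fact p.Prime] (hd : 1 ≤ d)
    (J : Type*) [AddCommGroup J] (M : AddSubgroup J)
    (hM : M.index ≠ 0) (e : M ≃+ (Fin n → ℤ_[p])) :
    Finite (modD J d) ∧
    Nat.card (modD J d) * Nat.card (dTorsion M d) =
      Nat.card (modD M d) * Nat.card (dTorsion J d) ∧
    (¬ p ∣ d → Nat.card (modD J d) = Nat.card (dTorsion J d)) ∧
    (d = p → Nat.card (modD J d) = p ^ n * Nat.card (dTorsion J d)) := by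
  classical
  set f := mulByHom J d with hf
  -- torsion-freeness of M
  have htfM : ∀ c : M, d • c = 0 → c = 0 := by
    intro c h1
    have h2 : d • e c = 0 := by rw [← map_nsmul, h1, map_zero]
    have h3 : e c = 0 := by
      funext i
      have h4 := congrFun h2 i
      have h5 : (d : ℤ_[p]) * (e c i) = 0 := by
        rw [← nsmul_eq_mul]; exact h4
      have hd' : (d : ℤ_[p]) ≠ 0 := Nat.cast_ne_zero.2 (by omega)
      simpa using (mul_eq_zero.1 h5).resolve_left hd'
    have := e.injective (by rw [h3, map_zero] : e c = e 0)
    exact this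
  have htf : ∀ x : J, x ∈ M → d • x = 0 → x = 0 := by
    intro x hx h0
    have h1 : d • (⟨x, hx⟩ : M) = 0 := by
      apply Subtype.ext
      simpa using h0
    simpa using congrArg Subtype.val (htfM _ h1)
  -- M has trivial d-torsion
  have hsub : Subsingleton (dTorsion M d) := by
    constructor
    rintro ⟨a, ha⟩ ⟨b, hb⟩
    obtain rfl : a = 0 := htfM a ha
    obtain rfl : b = 0 := htfM b hb
    rfl
  have hTM1 : Nat.card (dTorsion M d) = 1 :=
    Nat.card_eq_one_iff_unique.2 ⟨hsub, ⟨0⟩⟩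
  -- J/M is finite
  have hQfin : Finite (J ⧸ M) := Nat.finite_of_card_ne_zero (by
    rwa [← AddSubgroup.index_eq_card])
  -- the torsion of J is finite
  have hTinj : Function.Injective
      (fun x : dTorsion J d => (QuotientAddGroup.mk x.1 : J ⧸ M)) := by
    rintro ⟨x, hx⟩ ⟨y, hy⟩ hxy
    have hm : -x + y ∈ M := (QuotientAddGroup.eq).1 hxy
    have hx' : d • x = 0 := hx
    have hy' : d • y = 0 := hy
    have h0 : d • (-x + y) = 0 := by rw [smul_add, smul_neg, hx', hy']; simp
    have := htf _ hm h0
    exact Subtype.ext (by rw [← neg_add_eq_zero]; exact this)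
  have hTfin : Finite (dTorsion J d) := Finite.of_injective _ hTinj
  have hcoe : ∀ y : M, ((mulByHom (↥M) d) y : J) = d • (y : J) := fun y => rfl
  -- index computations
  have hmaple : M.map f ≤ M := by
    rintro _ ⟨m, hm, rfl⟩
    exact M.nsmul_mem hm d
  have h1 : (M.map f).index = (M ⊔ f.ker).index * f.range.index := AddSubgroup.index_map M f
  have h2 : (M.map f).relIndex M * M.index = (M.map f).index :=
    AddSubgroup.relIndex_mul_index hmaple
  have h3 : M.relIndex (M ⊔ f.ker) * (M ⊔ f.ker).index = M.index :=
    AddSubgroup.relIndex_mul_index le_sup_left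
  have h4 : M.relIndex (M ⊔ f.ker) = Nat.card (dTorsion J d) := by
    rw [sup_comm, AddSubgroup.relIndex_sup_right]
    have hbot : M.addSubgroupOf f.ker = ⊥ := by
      ext ⟨x, hx⟩
      simp only [AddSubgroup.mem_addSubgroupOf, AddSubgroup.mem_bot]
      constructor
      · intro hxm
        exact Subtype.ext (htf x hxm hx)
      · intro h0
        have hx0 : x = 0 := congrArg Subtype.val h0
        rw [hx0]
        exact M.zero_mem
    show (M.addSubgroupOf f.ker).index = _
    rw [hbot, AddSubgroup.index_bot]
    rfl
  have h5 : (M.map f).relIndex M = Nat.card (modD M d) := by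
    have hOf : (M.map f).addSubgroupOf M = (mulByHom M d).range := by
      ext x
      simp only [AddSubgroup.mem_addSubgroupOf, AddSubgroup.mem_map, AddMonoidHom.mem_range]
      constructor
      · rintro ⟨a, ha, hax⟩
        refine ⟨⟨a, ha⟩, Subtype.ext ?_⟩
        rw [hcoe]
        exact hax
      · rintro ⟨y, rfl⟩
        refine ⟨y.1, y.2, ?_⟩
        show f (y : J) = _
        rw [hcoe]
        rfl
    show ((M.map f).addSubgroupOf M).index = _
    rw [hOf, AddSubgroup.index_eq_card]
  have hS : (M ⊔ f.ker).index ≠ 0 := by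
    intro h0
    exact hM (zero_dvd_iff.1 (h0 ▸ AddSubgroup.index_dvd_of_le (le_sup_left : M ≤ M ⊔ f.ker)))
  have key : f.range.index = Nat.card (modD M d) * Nat.card (dTorsion J d) := by
    have e1 : Nat.card (modD M d) * M.index = (M ⊔ f.ker).index * f.range.index := by
      rw [← h5, h2, h1]
    rw [← h3, h4] at e1
    have e3 : (M ⊔ f.ker).index * (Nat.card (modD M d) * Nat.card (dTorsion J d)) =
        (M ⊔ f.ker).index * f.range.index := by rw [← e1]; ring
    exact (mul_left_cancel₀ hS e3).symm
  have hRindex : Nat.card (modD J d) = f.range.index := (AddSubgroup.index_eq_card f.range).symm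
  -- cardinality of M/dM
  have hcardM : Nat.card (modD M d) = (p ^ (d.factorization p)) ^ n := by
    have e2 := (modDCongr e d).trans (modDPadicEquiv n hd)
    rw [Nat.card_congr e2.toEquiv, Nat.card_pi]
    simp [Nat.card_zmod]
  have hcardM_ne : Nat.card (modD M d) ≠ 0 := by
    rw [hcardM]
    exact pow_ne_zero _ (pow_ne_zero _ (Nat.Prime.ne_zero ‹Fact p.Prime›.out))
  have hT_ne : Nat.card (dTorsion J d) ≠ 0 := Nat.card_ne_zero.2 ⟨⟨0⟩, hTfin⟩
  refine ⟨?_, ?_, ?_, ?_⟩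
  · exact Nat.finite_of_card_ne_zero (by
      rw [hRindex, key]; exact Nat.mul_ne_zero hcardM_ne hT_ne)
  · rw [hTM1, mul_one, hRindex, key]
  · intro hpd
    have h0 : d.factorization p = 0 := Nat.factorization_eq_zero_of_not_dvd hpd
    rw [hRindex, key, hcardM, h0]
    simp
  · intro hdp
    subst hdp
    have h1' : d.factorization d = 1 := Nat.Prime.factorization_self ‹Fact d.Prime›.out
    rw [hRindex, key, hcardM, h1', pow_one]
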